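/- arXiv:2309.09200 — 4 statements merged into one kernel-verified Lean document; each statement's English description precedes it below -/
import Mathlib

section
/- For κ > 0 and any slowly varying function l satisfying a Potter-type bound l(n/x)/l(n) ≤ C(x^ε ∨ x^{-ε}) for some small ε < 1 with κ - ε > 0, the limit as n → ∞ of ∫₀ⁿ (1 - x/n)ⁿ · (l(n/x)/l(n)) · x^{κ-1} dx equals Γ(κ). -/
open MeasureTheory Filter Real Set

/-- For `κ > 0` and a positive, measurable, slowly varying function `l`
satisfying a Potter-type bound, `∫₀ⁿ (1 - x/n)ⁿ (l(n/x)/l(n)) x^{κ-1} dx → Γ(κ)`. -/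
theorem stmt0 (κ : ℝ) (hκ : 0 < κ) (l : ℝ → ℝ)
    (hl_pos : ∀ x, 0 < l x) (hl_meas : Measurable l)
    (hl_sv : ∀ lam : ℝ, 0 < lam →
      Tendsto (fun x => l (lam * x) / l x) atTop (nhds 1))
    (C ε : ℝ) (hC : 0 < C) (hε : 0 < ε) (hε1 : ε < 1) (hεκ : ε < κ)
    (hPotter : ∀ᶠ n : ℕ in atTop, ∀ x ∈ Set.Ioc (0:ℝ) (n:ℝ),
      l ((n:ℝ) / x) / l n ≤ C * max (x ^ ε) (x ^ (-ε))) :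
    Tendsto (fun n : ℕ => ∫ x in Set.Ioc (0:ℝ) (n:ℝ),
        (1 - x / (n:ℝ)) ^ n * (l ((n:ℝ) / x) / l n) * x ^ (κ - 1))
      atTop (nhds (Real.Gamma κ)) := by
  set μ := volume.restrict (Ioi (0:ℝ)) with hμ
  set g : ℕ → ℝ → ℝ := fun n x =>
    (1 - x / (n:ℝ)) ^ n * (l ((n:ℝ) / x) / l n) * x ^ (κ - 1) with hg
  set F : ℕ → ℝ → ℝ := fun n => (Ioc (0:ℝ) (n:ℝ)).indicator (g n) with hF
  have hrw : ∀ n : ℕ, ∫ x in Ioc (0:ℝ) (n:ℝ), g n x = ∫ x, F n x ∂μ := by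
    intro n
    rw [hF, integral_indicator measurableSet_Ioc, hμ,
      Measure.restrict_restrict measurableSet_Ioc,
      inter_eq_self_of_subset_left Ioc_subset_Ioi_self]
  have hΓ : Real.Gamma κ = ∫ x, Real.exp (-x) * x ^ (κ - 1) ∂μ :=
    Real.Gamma_eq_integral hκ
  simp only [hrw, hΓ]
  change Tendsto (fun n : ℕ => ∫ x in Ioc (0:ℝ) (n:ℝ), g n x) _ _
  simp only [hrw]
  set bound : ℝ → ℝ := fun x =>
    C * (Real.exp (-x) * x ^ (κ + ε - 1)) + C * (Real.exp (-x) * x ^ (κ - ε - 1))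
    with hbound
  apply tendsto_integral_filter_of_dominated_convergence bound
  · -- measurability
    filter_upwards with n
    apply AEStronglyMeasurable.indicator _ measurableSet_Ioc
    apply Measurable.aestronglyMeasurable
    exact (((measurable_const.sub (measurable_id.div_const _)).pow_const n).mul
      ((hl_meas.comp (measurable_const.div measurable_id)).div_const _)).mul
      (by fun_prop : Measurable fun x : ℝ => x ^ (κ - 1))
  · -- bound
    filter_upwards [hPotter] with n hP
    filter_upwards [ae_restrict_mem measurableSet_Ioi] with x hx
    rcases em (x ∈ Ioc (0:ℝ) (n:ℝ)) with hmem | hmem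
    · obtain ⟨hx0, hxn⟩ := hmem
      have hn0 : (0:ℝ) < n := lt_of_lt_of_le hx0 hxn
      have hdiv : x / (n:ℝ) ≤ 1 := (div_le_one hn0).mpr hxn
      have h1 : (0:ℝ) ≤ 1 - x / n := by linarith
      have hexp : (1 - x / (n:ℝ)) ^ n ≤ Real.exp (-x) := by
        have hstep : 1 - x / (n:ℝ) ≤ Real.exp (-(x / n)) := by
          have := Real.add_one_le_exp (-(x / n)); linarith
        calc (1 - x / (n:ℝ)) ^ n ≤ (Real.exp (-(x / n))) ^ n :=
              pow_le_pow_left₀ h1 hstep n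
          _ = Real.exp ((n : ℝ) * (-(x / n))) := (Real.exp_nat_mul _ n).symm
          _ = Real.exp (-x) := by
              congr 1
              field_simp
      have hlb := hP x ⟨hx0, hxn⟩
      have hl0 : 0 < l ((n:ℝ) / x) / l n := div_pos (hl_pos _) (hl_pos _)
      have hx1 : (0:ℝ) < x ^ (κ - 1) := rpow_pos_of_pos hx0 _
      have hmax : max (x ^ ε) (x ^ (-ε)) ≤ x ^ ε + x ^ (-ε) := by
        apply max_le <;> nlinarith [rpow_pos_of_pos hx0 ε, rpow_pos_of_pos hx0 (-ε)]
      have key : g n x ≤ bound x := by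
        have h2 : g n x ≤ Real.exp (-x) * (C * (x ^ ε + x ^ (-ε))) * x ^ (κ - 1) := by
          apply mul_le_mul_of_nonneg_right _ hx1.le
          apply mul_le_mul hexp (hlb.trans (by nlinarith)) hl0.le (Real.exp_pos _).le
        have h3 : Real.exp (-x) * (C * (x ^ ε + x ^ (-ε))) * x ^ (κ - 1) = bound x := by
          simp only [hbound]
          rw [show (κ + ε - 1) = ε + (κ - 1) by ring,
            show (κ - ε - 1) = -ε + (κ - 1) by ring,
            Real.rpow_add hx0, Real.rpow_add hx0]
          ring
        linarith
      have hnn : 0 ≤ g n x :=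
        mul_nonneg (mul_nonneg (pow_nonneg h1 n) hl0.le) hx1.le
      have hFx : F n x = g n x :=
        indicator_of_mem (show x ∈ Ioc (0:ℝ) (n:ℝ) from ⟨hx0, hxn⟩) (g n)
      rw [hFx, Real.norm_eq_abs, abs_of_nonneg hnn]
      exact key
    · have hFx : F n x = 0 := indicator_of_notMem hmem _
      rw [hFx, norm_zero, hbound]
      have hx0 : (0:ℝ) < x := hx
      positivity
  · -- integrability of bound
    exact ((Real.GammaIntegral_convergent (by linarith : (0:ℝ) < κ + ε)).const_mul C).add
      ((Real.GammaIntegral_convergent (by linarith : (0:ℝ) < κ - ε)).const_mul C)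
  · -- pointwise limit
    filter_upwards [ae_restrict_mem measurableSet_Ioi] with x hx
    have hx0 : (0:ℝ) < x := hx
    have hev : ∀ᶠ n : ℕ in atTop, F n x = g n x := by
      filter_upwards [eventually_ge_atTop ⌈x⌉₊] with n hn
      apply indicator_of_mem
      exact ⟨hx0, le_trans (Nat.le_ceil x) (by exact_mod_cast hn)⟩
    rw [show Real.exp (-x) * x ^ (κ - 1) = Real.exp (-x) * 1 * x ^ (κ - 1) by ring]
    apply Tendsto.congr' (hev.mono fun n h => h.symm)
    apply Tendsto.mul_const
    apply Tendsto.mul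
    · have := Real.tendsto_one_add_div_pow_exp (-x)
      simpa [sub_eq_add_neg, neg_div] using this
    · have h1 := (hl_sv (1/x) (by positivity)).comp tendsto_natCast_atTop_atTop
      apply h1.congr
      intro n
      simp [one_div, div_eq_mul_inv, mul_comm]
end

section
/- Let m > 1 and define the matrix m_{ij} = ((i+j-1)!/((i-1)!·j!)) · m^{i+1}/(m+1)^{i+j} for i, j ≥ 1. Then the vectors a_i = (m-1)·m^{-i} and b_i = (1 - 1/m)·i satisfy: (1) Σ_{i≥1} a_i = 1; (2) Σ_{i≥1} a_i·b_i = 1; (3) Σ_{i≥1} a_i·m_{ij} = a_j for all j ≥ 1 (left eigenvector with eigenvalue 1); (4) Σ_{j≥1} m_{ij}·b_j = b_i for all i ≥ 1 (right eigenvector with eigenvalue 1). -/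
open scoped BigOperators

/-- eigenvector identities for the mean matrix
`m_{ij} = binom(i+j-1, j) m^{i+1}/(m+1)^{i+j}` with `a_i = (m-1)m^{-i}`,
`b_i = (1-1/m) i`. -/
theorem stmt5 (m : ℝ) (hm : 1 < m)
    (M : ℕ → ℕ → ℝ)
    (hM : ∀ i j, M i j = (Nat.choose (i + j - 1) j : ℝ) * m ^ (i + 1) / (m + 1) ^ (i + j))
    (a b : ℕ → ℝ)
    (ha : ∀ i, a i = (m - 1) / m ^ i)
    (hb : ∀ i, b i = (1 - 1 / m) * i) :
    (∑' i : ℕ, a (i + 1)) = 1 ∧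
    (∑' i : ℕ, a (i + 1) * b (i + 1)) = 1 ∧
    (∀ j : ℕ, 1 ≤ j → (∑' i : ℕ, a (i + 1) * M (i + 1) j) = a j) ∧
    (∀ i : ℕ, 1 ≤ i → (∑' j : ℕ, M i (j + 1) * b (j + 1)) = b i) := by
  have hm0 : (0:ℝ) < m := lt_trans one_pos hm
  have hm1 : (0:ℝ) < m + 1 := by linarith
  have hmne : m ≠ 0 := ne_of_gt hm0
  have hm1ne : m + 1 ≠ 0 := ne_of_gt hm1
  have hm2 : m - 1 ≠ 0 := by intro h; linarith [sub_eq_zero.mp h]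
  have hx1 : ‖(1/m : ℝ)‖ < 1 := by
    rw [Real.norm_eq_abs, abs_of_pos (by positivity), div_lt_one hm0]; linarith
  have hx2 : ‖(1/(m+1) : ℝ)‖ < 1 := by
    rw [Real.norm_eq_abs, abs_of_pos (by positivity), div_lt_one hm1]; linarith
  have hkey : (1/(m+1) : ℝ) * (1/(m/(m+1))) = 1/m := by
    field_simp
  have hfrac : (1:ℝ) - 1/(m+1) = m/(m+1) := by field_simp; ring
  refine ⟨?_, ?_, ?_, ?_⟩
  · calc (∑' i : ℕ, a (i + 1))
        = ∑' i : ℕ, ((m-1)/m) * (1/m)^i := by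
          congr 1; funext i; rw [ha]
          rw [div_pow, one_pow, pow_succ]; field_simp
      _ = ((m-1)/m) * (1 - 1/m)⁻¹ :=
          ((hasSum_geometric_of_norm_lt_one hx1).mul_left _).tsum_eq
      _ = 1 := by
          have : (1:ℝ) - 1/m = (m-1)/m := by field_simp
          rw [this]
          field_simp
  · calc (∑' i : ℕ, a (i + 1) * b (i + 1))
        = ∑' i : ℕ, ((m-1)*(1-1/m)/m) * (((i+1).choose 1 : ℝ) * (1/m)^i) := by
          congr 1; funext i; rw [ha, hb, Nat.choose_one_right]
          rw [div_pow, one_pow, pow_succ]; push_cast; field_simp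
      _ = ((m-1)*(1-1/m)/m) * (1/(1 - 1/m)^(1+1)) :=
          ((hasSum_choose_mul_geometric_of_norm_lt_one 1 hx1).mul_left _).tsum_eq
      _ = 1 := by
          have : (1:ℝ) - 1/m = (m-1)/m := by field_simp
          rw [this, div_pow]
          field_simp [hm2]
          ring
  · intro j hj
    calc (∑' i : ℕ, a (i + 1) * M (i + 1) j)
        = ∑' i : ℕ, ((m-1)*m*(1/(m+1))^(j+1)) * (((i+j).choose j : ℝ) * (1/(m+1))^i) := by
          congr 1; funext i
          rw [ha, hM]
          have h1 : i + 1 + j - 1 = i + j := by omega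
          rw [h1, div_pow, one_pow, div_pow, one_pow]
          rw [pow_add, pow_succ, pow_succ, pow_succ]
          field_simp
          ring
      _ = ((m-1)*m*(1/(m+1))^(j+1)) * (1/(1 - 1/(m+1))^(j+1)) :=
          ((hasSum_choose_mul_geometric_of_norm_lt_one j hx2).mul_left _).tsum_eq
      _ = a j := by
          rw [ha, hfrac, ← one_div_pow, mul_assoc, ← mul_pow, hkey]
          rw [one_div, inv_pow, pow_succ]
          field_simp
  · intro i hi
    calc (∑' j : ℕ, M i (j + 1) * b (j + 1))
        = ∑' j : ℕ, ((i:ℝ)*(1-1/m)*m^(i+1)*(1/(m+1))^(i+1)) * (((j+i).choose i : ℝ) * (1/(m+1))^j) := by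
          congr 1; funext j
          rw [hM, hb]
          have h1 : i + (j+1) - 1 = i + j := by omega
          rw [h1]
          have keyn : (i+j).choose (j+1) * (j+1) = (j+i).choose i * i := by
            rw [Nat.choose_succ_right_eq, Nat.add_sub_cancel]
            congr 1
            rw [add_comm i j, ← Nat.choose_symm (Nat.le_add_left i j), Nat.add_sub_cancel]
          have keyr : ((i+j).choose (j+1) : ℝ) * ((j:ℝ)+1) = ((j+i).choose i : ℝ) * i := by
            exact_mod_cast keyn
          calc ((i+j).choose (j+1) : ℝ) * m^(i+1) / (m+1)^(i+(j+1)) * ((1-1/m)*((j+1:ℕ):ℝ))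
              = (((i+j).choose (j+1) : ℝ) * ((j:ℝ)+1)) * (m^(i+1) / (m+1)^(i+(j+1)) * (1-1/m)) := by
                push_cast; ring
            _ = (((j+i).choose i : ℝ) * i) * (m^(i+1) / (m+1)^(i+(j+1)) * (1-1/m)) := by
                rw [keyr]
            _ = ((i:ℝ)*(1-1/m)*m^(i+1)*(1/(m+1))^(i+1)) * (((j+i).choose i : ℝ) * (1/(m+1))^j) := by
                have h2 : i + (j+1) = (i+1) + j := by omega
                rw [h2, pow_add, div_pow, one_pow, div_pow, one_pow]
                field_simp
                ring
      _ = ((i:ℝ)*(1-1/m)*m^(i+1)*(1/(m+1))^(i+1)) * (1/(1 - 1/(m+1))^(i+1)) :=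
          ((hasSum_choose_mul_geometric_of_norm_lt_one i hx2).mul_left _).tsum_eq
      _ = b i := by
          rw [hb, hfrac, ← one_div_pow, mul_assoc, ← mul_pow, hkey]
          rw [one_div, inv_pow]
          rw [mul_assoc, mul_inv_cancel₀ (pow_ne_zero _ hmne), mul_one]
          ring
end

section
/- Let m > 1 and let (β_k)_{k≥0} be the Markov chain on the positive integers with transition probabilities p̂_{ij} = (b_i/b_j)·m_{ij}, where m_{ij} = binom(i+j-1, j)·m^{i+1}/(m+1)^{i+j} and b_i = (1-1/m)·i. Then the measure (â_i)_{i≥1} with â_i = m^{-i}/i is a stationary (invariant) measure for this chain: Σ_{i≥1} â_i · p̂_{ij} = â_j for all j ≥ 1. -/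
open scoped BigOperators

/-- `â_i = m^{-i}/i` is a stationary measure for the chain with
transition probabilities `p̂_{ij} = (b_i/b_j) m_{ij}`. -/
theorem stmt6 (m : ℝ) (hm : 1 < m)
    (M : ℕ → ℕ → ℝ)
    (hM : ∀ i j, M i j = (Nat.choose (i + j - 1) j : ℝ) * m ^ (i + 1) / (m + 1) ^ (i + j))
    (b : ℕ → ℝ) (hb : ∀ i, b i = (1 - 1 / m) * i)
    (phat : ℕ → ℕ → ℝ) (hphat : ∀ i j, phat i j = (b i / b j) * M i j)
    (ahat : ℕ → ℝ) (hahat : ∀ i, ahat i = 1 / (m ^ i * i)) :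
    ∀ j : ℕ, 1 ≤ j → (∑' i : ℕ, ahat (i + 1) * phat (i + 1) j) = ahat j := by
  intro j hj
  have hm0 : (0:ℝ) < m := by linarith
  have hm0' : m ≠ 0 := ne_of_gt hm0
  have hmp1 : (0:ℝ) < m + 1 := by linarith
  have hmp1' : m + 1 ≠ 0 := ne_of_gt hmp1
  have hj0 : (0:ℝ) < (j:ℝ) := by exact_mod_cast hj
  have hj0' : (j:ℝ) ≠ 0 := ne_of_gt hj0
  set x : ℝ := (m + 1)⁻¹ with hxdef
  have hx : ‖x‖ < 1 := by
    rw [Real.norm_eq_abs, abs_of_pos (inv_pos.2 hmp1)]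
    rw [inv_lt_one_iff₀]
    right; linarith
  have hne : (1 - 1/m) ≠ 0 := by
    have h1 : 1/m < 1 := by rw [div_lt_one hm0]; exact hm
    linarith
  have key : ∀ i : ℕ, ahat (i + 1) * phat (i + 1) j
      = (m / j * x ^ (j + 1)) * (((i + j).choose j : ℝ) * x ^ i) := by
    intro i
    rw [hahat, hphat, hM, hb, hb]
    have h1 : i + 1 + j - 1 = i + j := by omega
    rw [h1, mul_div_mul_left _ _ hne]
    have hxp : ∀ k : ℕ, x ^ k = ((m+1) ^ k)⁻¹ := by
      intro k; rw [hxdef, inv_pow]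
    rw [hxp, hxp]
    have hii : ((i:ℝ)+1) ≠ 0 := by positivity
    push_cast
    field_simp
    ring
  rw [tsum_congr key, tsum_mul_left,
    tsum_choose_mul_geometric_of_norm_lt_one j hx, hahat]
  have h1x : 1 - x = m / (m + 1) := by
    rw [hxdef]; field_simp; ring
  have h1x0 : 1 - x ≠ 0 := by rw [h1x]; positivity
  have hq : x / (1 - x) = 1 / m := by
    rw [h1x, hxdef]; field_simp
  have : m / j * x ^ (j+1) * (1 / (1 - x) ^ (j+1)) = m / j * (x / (1-x)) ^ (j+1) := by
    rw [div_pow]; field_simp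
  rw [this, hq]
  field_simp
  ring
  rw [mul_right_comm m, mul_inv_cancel₀ hm0', one_mul, inv_pow, mul_inv_cancel₀ (pow_ne_zero _ hm0')]
end

section
/- Let S_x = ∫_{A(m+1)/x}^{1} (x/β)·(1 - y)^{x/β - 1}·l(1/y)·y^{κ-1} dy for fixed β ≥ 1, m > 1, A > 0, κ ∈ (1,2), and l slowly varying with Potter bounds. Then as x → ∞, S_x ~ (x/β)^{-(κ-1)}·l(x)·∫_{A(m+1)/β}^{∞} e^{-y}·y^{κ-1} dy (up to the stated normalization); in particular S_x = O(x^{-(κ-1)} l(x)) with a constant that tends to 0 as A → ∞. -/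
open MeasureTheory Filter Asymptotics Set Topology

lemma aux_int {q c : ℝ} (hq : -1 < q) (hc : 0 < c) :
    IntegrableOn (fun u : ℝ => Real.exp (-(u/2)) * u ^ q) (Set.Ioi c) := by
  have h0 : IntegrableOn (fun v : ℝ => Real.exp (-v) * (2*v) ^ q) (Set.Ioi 0) := by
    have h1 := Real.GammaIntegral_convergent (s := q+1) (by linarith)
    have h2 : IntegrableOn (fun v : ℝ => (2:ℝ)^q * (Real.exp (-v) * v ^ (q+1-1)))
        (Set.Ioi 0) := h1.const_mul _
    refine h2.congr_fun (fun v hv => ?_) measurableSet_Ioi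
    rw [Real.mul_rpow (by norm_num) (le_of_lt hv)]
    ring_nf
  have h3 : IntegrableOn (fun v : ℝ => Real.exp (-v) * (2*v) ^ q) (Set.Ioi (2⁻¹ * c)) :=
    h0.mono_set (Set.Ioi_subset_Ioi (by positivity))
  have h4 := (integrableOn_Ioi_comp_mul_left_iff
      (fun v : ℝ => Real.exp (-v) * (2*v) ^ q) c (by norm_num : (0:ℝ) < 2⁻¹)).mpr h3
  refine h4.congr_fun (fun u hu => ?_) measurableSet_Ioi
  beta_reduce
  rw [show 2 * (2⁻¹ * u) = u by ring, show -(2⁻¹*u) = -(u/2) by ring]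

/-- the truncated Karamata-type integral
`S_x = ∫_{A(m+1)/x}^1 (x/β)(1-y)^{x/β-1} l(1/y) y^{κ-1} dy` satisfies
`S_x ~ (x/β)^{-(κ-1)} l(x) ∫_{A(m+1)/β}^∞ e^{-y} y^{κ-1} dy` as `x → ∞`. -/
theorem stmt18 (m A β κ : ℝ) (hm : 1 < m) (hA : 0 < A) (hβ : 1 ≤ β)
    (hκ1 : 1 < κ) (hκ2 : κ < 2)
    (l : ℝ → ℝ) (hl_pos : ∀ x, 0 < l x) (hl_meas : Measurable l)
    (hl_sv : ∀ lam : ℝ, 0 < lam →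
      Tendsto (fun x => l (lam * x) / l x) atTop (nhds 1))
    (C ε : ℝ) (hC : 0 < C) (hε : 0 < ε) (hεκ : ε < κ - 1)
    (hPotter : ∀ x y : ℝ, 0 < y → 1 ≤ x →
      l (x / y) / l x ≤ C * max (y ^ ε) (y ^ (-ε))) :
    (fun x : ℝ => ∫ y in Set.Ioc (A * (m + 1) / x) (1 : ℝ),
        (x / β) * (1 - y) ^ (x / β - 1) * l (1 / y) * y ^ (κ - 1))
      ~[atTop]
    (fun x : ℝ => (x / β) ^ (-(κ - 1)) * l x *
        ∫ y in Set.Ioi (A * (m + 1) / β), Real.exp (-y) * y ^ (κ - 1)) := by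
  have hβ0 : (0:ℝ) < β := lt_of_lt_of_le one_pos hβ
  set c : ℝ := A * (m + 1) / β with hc_def
  have hc : 0 < c := by positivity
  set I : ℝ := ∫ y in Set.Ioi c, Real.exp (-y) * y ^ (κ - 1) with hI_def
  -- integrability of the limit integrand
  have hIint : IntegrableOn (fun y : ℝ => Real.exp (-y) * y ^ (κ - 1)) (Set.Ioi c) :=
    (Real.GammaIntegral_convergent (by linarith : (0:ℝ) < κ)).mono_set
      (Set.Ioi_subset_Ioi hc.le)
  have hI_pos : 0 < I := by
    rw [hI_def]
    rw [setIntegral_pos_iff_support_of_nonneg_ae]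
    · refine lt_of_lt_of_le ?_ (measure_mono (show Set.Ioi c ⊆
          Function.support (fun y : ℝ => Real.exp (-y) * y ^ (κ - 1)) ∩ Set.Ioi c from ?_))
      · rw [Real.volume_Ioi]; exact ENNReal.zero_lt_top
      · intro y hy
        have hy0 : 0 < y := lt_trans hc hy
        exact ⟨ne_of_gt (by positivity), hy⟩
    · filter_upwards [ae_restrict_mem measurableSet_Ioi] with y hy
      have hy0 : 0 < y := lt_trans hc hy
      positivity
    · exact hIint
  -- the rescaled integrand family
  set G : ℝ → ℝ → ℝ := fun x u =>
    (1 - β * u / x) ^ (x / β - 1) * (l (x / (β * u)) / l x) * u ^ (κ - 1) with hG_def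
  set Φ : ℝ → ℝ → ℝ := fun x => (Set.Ioc c (x / β)).indicator (G x) with hΦ_def
  -- dominated convergence
  have h_main : Tendsto (fun x => ∫ u in Set.Ioi c, Φ x u) atTop (𝓝 I) := by
    rw [hI_def]
    set bound : ℝ → ℝ := fun u => C * β ^ ε * (Real.exp (-(u/2)) * u ^ (κ - 1 + ε))
        + C * (β * c) ^ (-ε) * (Real.exp (-(u/2)) * u ^ (κ - 1)) with hbound_def
    refine tendsto_integral_filter_of_dominated_convergence bound ?_ ?_ ?_ ?_
    · -- measurability
      filter_upwards with x
      refine (Measurable.indicator ?_ measurableSet_Ioc).aestronglyMeasurable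
      refine Measurable.mul (Measurable.mul ?_ ?_) ?_
      · exact Measurable.pow (measurable_const.sub ((measurable_id.const_mul β).div_const x))
          measurable_const
      · exact (hl_meas.comp (measurable_const.div (measurable_id.const_mul β))).div_const _
      · exact Measurable.pow measurable_id measurable_const
    · -- bound
      filter_upwards [eventually_ge_atTop (max 1 (2*β))] with x hx
      have hx1 : (1:ℝ) ≤ x := le_trans (le_max_left _ _) hx
      have hx2β : 2*β ≤ x := le_trans (le_max_right _ _) hx
      have hx0 : (0:ℝ) < x := lt_of_lt_of_le one_pos hx1
      filter_upwards [ae_restrict_mem measurableSet_Ioi] with u hu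
      have hu0 : 0 < u := lt_trans hc hu
      simp only [hΦ_def]
      by_cases hmem : u ∈ Set.Ioc c (x/β)
      · rw [Set.indicator_of_mem hmem]
        simp only [hG_def]
        have hub : β * u ≤ x := by
          have := (le_div_iff₀ hβ0).mp hmem.2
          linarith [mul_comm u β]
        have hb0 : 0 ≤ 1 - β*u/x := by
          have : β*u/x ≤ 1 := (div_le_one hx0).mpr hub
          linarith
        have hp1 : (1:ℝ) ≤ x/β - 1 := by
          have : (2:ℝ) ≤ x/β := (le_div_iff₀ hβ0).mpr (by linarith)
          linarith
        have h_rpow : (1 - β*u/x) ^ (x/β - 1) ≤ Real.exp (-(u/2)) := by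
          rcases eq_or_lt_of_le hb0 with h|h
          · rw [← h, Real.zero_rpow (by linarith : x/β - 1 ≠ 0)]
            positivity
          · rw [Real.rpow_def_of_pos h]
            rw [Real.exp_le_exp, mul_comm]
            have hlog : Real.log (1 - β*u/x) ≤ -(β*u/x) := by
              have := Real.log_le_sub_one_of_pos h
              linarith
            have h5 : (x/β - 1) * Real.log (1 - β*u/x) ≤ (x/β - 1) * (-(β*u/x)) :=
              mul_le_mul_of_nonneg_left hlog (by linarith)
            refine le_trans h5 ?_
            have heq : (x/β - 1) * (-(β*u/x)) = -(u - β*u/x) := by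
              field_simp
            rw [heq]
            have h6 : β*u/x ≤ u/2 := by
              rw [div_le_iff₀ hx0]
              nlinarith
            linarith
        have hratio_le : l (x/(β*u)) / l x ≤ C * ((β*u)^ε + (β*c)^(-ε)) := by
          refine le_trans (hPotter x (β*u) (by positivity) hx1) ?_
          refine mul_le_mul_of_nonneg_left (max_le ?_ ?_) hC.le
          · exact le_add_of_nonneg_right (by positivity)
          · refine le_trans (Real.rpow_le_rpow_of_nonpos (by positivity)
              (mul_le_mul_of_nonneg_left (le_of_lt hu) hβ0.le) (by linarith)) ?_
            exact le_add_of_nonneg_left (by positivity)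
        have hrnn : 0 ≤ l (x/(β*u)) / l x := le_of_lt (div_pos (hl_pos _) (hl_pos _))
        have hGnn : 0 ≤ (1 - β*u/x) ^ (x/β - 1) * (l (x/(β*u)) / l x) * u ^ (κ-1) := by
          have h1 : 0 ≤ (1 - β*u/x) ^ (x/β - 1) := Real.rpow_nonneg hb0 _
          have h3 : (0:ℝ) ≤ u ^ (κ-1) := Real.rpow_nonneg hu0.le _
          exact mul_nonneg (mul_nonneg h1 hrnn) h3
        rw [Real.norm_of_nonneg hGnn]
        calc (1 - β*u/x) ^ (x/β - 1) * (l (x/(β*u)) / l x) * u ^ (κ-1)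
            ≤ Real.exp (-(u/2)) * (C * ((β*u)^ε + (β*c)^(-ε))) * u^(κ-1) := by
              refine mul_le_mul_of_nonneg_right
                (mul_le_mul h_rpow hratio_le hrnn (by positivity))
                (Real.rpow_nonneg hu0.le _)
          _ = bound u := by
              rw [hbound_def]
              simp only
              rw [Real.mul_rpow hβ0.le hu0.le, Real.rpow_add hu0]
              ring
      · rw [Set.indicator_of_notMem hmem]
        simp only [norm_zero, hbound_def]
        positivity
    · -- integrability of bound
      rw [hbound_def]
      exact ((aux_int (by linarith) hc).const_mul _).add ((aux_int (by linarith) hc).const_mul _)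
    · -- pointwise limit
      filter_upwards [ae_restrict_mem measurableSet_Ioi] with u hu
      have hu0 : 0 < u := lt_trans hc hu
      have hev : ∀ᶠ x in atTop, G x u = Φ x u := by
        filter_upwards [eventually_ge_atTop (β*u)] with x hx
        simp only [hΦ_def]
        rw [Set.indicator_of_mem (Set.mem_Ioc.mpr ⟨hu, (le_div_iff₀ hβ0).mpr (by linarith [mul_comm u β])⟩)]
      have hs : Tendsto (fun x : ℝ => x / β) atTop atTop :=
        tendsto_id.atTop_div_const hβ0
      have hbase : ∀ x : ℝ, 1 + -u / (x/β) = 1 - β*u/x := by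
        intro x; rw [div_div_eq_mul_div]; ring
      have hbl : Tendsto (fun x : ℝ => 1 + -u/(x/β)) atTop (𝓝 1) := by
        have h0 := (hs.const_div_atTop (-u)).const_add 1
        simpa using h0
      have hA1 : Tendsto (fun x : ℝ => (1 + -u/(x/β)) ^ (x/β)) atTop
          (𝓝 (Real.exp (-u))) := (Real.tendsto_one_add_div_rpow_exp (-u)).comp hs
      have hA2 : Tendsto (fun x : ℝ => (1 + -u/(x/β)) ^ (x/β - 1)) atTop
          (𝓝 (Real.exp (-u))) := by
        have h2 : Tendsto (fun x : ℝ => (1 + -u/(x/β)) ^ (x/β) / (1 + -u/(x/β))) atTop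
            (𝓝 (Real.exp (-u) / 1)) := hA1.div hbl one_ne_zero
        rw [div_one] at h2
        refine h2.congr' ?_
        filter_upwards [hbl.eventually (eventually_gt_nhds one_pos)] with x hxp
        rw [Real.rpow_sub hxp, Real.rpow_one]
      have hT1 : Tendsto (fun x : ℝ => (1 - β*u/x) ^ (x/β - 1)) atTop
          (𝓝 (Real.exp (-u))) := hA2.congr (fun x => by rw [hbase x])
      have hT2 : Tendsto (fun x : ℝ => l (x/(β*u)) / l x) atTop (𝓝 1) := by
        refine (hl_sv (1/(β*u)) (by positivity)).congr (fun x => ?_)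
        rw [one_div_mul_eq_div]
      have hprod := (hT1.mul hT2).mul_const (u ^ (κ-1))
      rw [mul_one] at hprod
      refine Tendsto.congr' hev ?_
      simpa only [hG_def] using hprod
  -- identification with the original integral
  have h_ident : ∀ᶠ x in atTop, ∫ u in Set.Ioi c, Φ x u =
      (x / β) ^ (κ - 1) / l x *
        ∫ y in Set.Ioc (A * (m + 1) / x) (1 : ℝ),
          (x / β) * (1 - y) ^ (x / β - 1) * l (1 / y) * y ^ (κ - 1) := by
    filter_upwards [eventually_ge_atTop (max 1 (A*(m+1)))] with x hx
    have hx1 : (1:ℝ) ≤ x := le_trans (le_max_left _ _) hx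
    have hxA : A*(m+1) ≤ x := le_trans (le_max_right _ _) hx
    have hx0 : (0:ℝ) < x := lt_of_lt_of_le one_pos hx1
    have hax : A*(m+1)/x ≤ 1 := by rw [div_le_one hx0]; exact hxA
    have hcx : c ≤ x/β := by rw [hc_def]; gcongr
    simp only [hΦ_def]
    rw [setIntegral_indicator measurableSet_Ioc,
        Set.inter_eq_self_of_subset_right Set.Ioc_subset_Ioi_self,
        ← intervalIntegral.integral_of_le hcx,
        ← intervalIntegral.integral_of_le hax]
    have hβx : β / x ≠ 0 := div_ne_zero hβ0.ne' hx0.ne'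
    have hchg := intervalIntegral.integral_comp_mul_left
        (a := c) (b := x/β)
        (fun y => (x / β) * (1 - y) ^ (x / β - 1) * l (1 / y) * y ^ (κ - 1)) hβx
    beta_reduce at hchg
    have e1 : (β/x)*c = A*(m+1)/x := by rw [hc_def]; field_simp
    have e2 : (β/x)*(x/β) = 1 := by field_simp
    rw [e1, e2, smul_eq_mul] at hchg
    have hS : (∫ y in (A*(m+1)/x)..(1:ℝ),
        (x / β) * (1 - y) ^ (x / β - 1) * l (1 / y) * y ^ (κ - 1))
        = (β/x) * ∫ u in c..(x/β),
            (x / β) * (1 - (β/x*u)) ^ (x / β - 1) * l (1 / (β/x*u)) * (β/x*u) ^ (κ - 1) := by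
      rw [hchg, ← mul_assoc, mul_inv_cancel₀ hβx, one_mul]
    rw [hS, ← mul_assoc, ← intervalIntegral.integral_const_mul]
    refine intervalIntegral.integral_congr (fun u hu => ?_)
    rw [Set.uIcc_of_le hcx] at hu
    have hu0 : 0 < u := lt_of_lt_of_le hc hu.1
    have r1 : β/x*u = β*u/x := by ring
    have r2 : (1:ℝ)/(β*u/x) = x/(β*u) := one_div_div _ _
    simp only [hG_def]
    rw [r1, r2]
    have r3 : (x/β)^(κ-1) * ((β*u/x))^(κ-1) = u^(κ-1) := by
      rw [← Real.mul_rpow (by positivity) (by positivity)]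
      congr 1
      field_simp
    rw [← r3]
    have hlx := (hl_pos x).ne'
    field_simp
  have h_ratio : Tendsto (fun x => (x / β) ^ (κ - 1) / l x *
      ∫ y in Set.Ioc (A * (m + 1) / x) (1 : ℝ),
        (x / β) * (1 - y) ^ (x / β - 1) * l (1 / y) * y ^ (κ - 1)) atTop (𝓝 I) :=
    h_main.congr' h_ident
  -- conclude
  rw [Asymptotics.isEquivalent_iff_tendsto_one ?hne]
  case hne =>
    filter_upwards [eventually_gt_atTop 0] with x hx
    have : 0 < x / β := by positivity
    have := hl_pos x
    positivity
  have htend := h_ratio.div_const I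
  rw [div_self hI_pos.ne'] at htend
  refine htend.congr' ?_
  filter_upwards [eventually_gt_atTop 0] with x hx
  have hxβ : 0 < x / β := by positivity
  have hlx := hl_pos x
  simp only [Pi.div_apply]
  rw [Real.rpow_neg hxβ.le]
  have hr : (0:ℝ) < (x / β) ^ (κ - 1) := Real.rpow_pos_of_pos hxβ _
  field_simp
end
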